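/- Under the same hypotheses (sup|H| ≤ c < 1, H of class C¹ with bounded gradient, μ>0), the series A[f](x) = Σ_{k≠0} f_k ∇·[ e^{ik·x} sinh(μ|k| H(x))/cosh(μ|k|) · k/|k| ] converges uniformly on T² for every bounded sequence (f_k) and defines a continuous doubly periodic function. -/

import Mathlib

open Complex Real Filter

noncomputable def knorm (k : ℤ × ℤ) : ℝ := Real.sqrt ((k.1 : ℝ)^2 + (k.2 : ℝ)^2)

noncomputable def ek (k : ℤ × ℤ) (x : ℝ × ℝ) : ℂ :=
  Complex.exp (Complex.I * ((k.1 : ℝ) * x.1 + (k.2 : ℝ) * x.2))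

/-- The vector field whose divergence defines the operator `A`:
`W_k(x) = e^{ik·x} sinh(μ|k|H(x))/cosh(μ|k|) · k/|k|`. -/
noncomputable def Afield (μ : ℝ) (H : ℝ × ℝ → ℝ) (k : ℤ × ℤ) (x : ℝ × ℝ) : ℂ × ℂ :=
  (ek k x * ((Real.sinh (μ * knorm k * H x) / Real.cosh (μ * knorm k) *
      ((k.1 : ℝ) / knorm k) : ℝ) : ℂ),
   ek k x * ((Real.sinh (μ * knorm k * H x) / Real.cosh (μ * knorm k) *
      ((k.2 : ℝ) / knorm k) : ℝ) : ℂ))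

noncomputable def Adiv (μ : ℝ) (H : ℝ × ℝ → ℝ) (k : ℤ × ℤ) (x : ℝ × ℝ) : ℂ :=
  deriv (fun t => (Afield μ H k (t, x.2)).1) x.1 +
  deriv (fun t => (Afield μ H k (x.1, t)).2) x.2

lemma hasDerivAt_H1 {H : ℝ × ℝ → ℝ} (hH : ContDiff ℝ 1 H) (x : ℝ × ℝ) :
    HasDerivAt (fun t => H (t, x.2)) (fderiv ℝ H x ((1:ℝ), (0:ℝ))) x.1 := by
  have hγ : HasDerivAt (fun t : ℝ => (t, x.2)) ((1:ℝ), (0:ℝ)) x.1 :=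
    HasDerivAt.prodMk (hasDerivAt_id x.1) (hasDerivAt_const x.1 x.2)
  have hf : HasFDerivAt H (fderiv ℝ H x) ((fun t : ℝ => (t, x.2)) x.1) := by
    simpa using (hH.differentiable one_ne_zero x).hasFDerivAt
  exact hf.comp_hasDerivAt x.1 hγ

lemma hasDerivAt_H2 {H : ℝ × ℝ → ℝ} (hH : ContDiff ℝ 1 H) (x : ℝ × ℝ) :
    HasDerivAt (fun t => H (x.1, t)) (fderiv ℝ H x ((0:ℝ), (1:ℝ))) x.2 := by
  have hγ : HasDerivAt (fun t : ℝ => (x.1, t)) ((0:ℝ), (1:ℝ)) x.2 :=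
    HasDerivAt.prodMk (hasDerivAt_const x.2 x.1) (hasDerivAt_id x.2)
  have hf : HasFDerivAt H (fderiv ℝ H x) ((fun t : ℝ => (x.1, t)) x.2) := by
    simpa using (hH.differentiable one_ne_zero x).hasFDerivAt
  exact hf.comp_hasDerivAt x.2 hγ

lemma hasDerivAt_ek1 (k : ℤ × ℤ) (x : ℝ × ℝ) :
    HasDerivAt (fun t => ek k (t, x.2)) (Complex.I * (k.1 : ℝ) * ek k x) x.1 := by
  have h0 : HasDerivAt (fun t : ℝ =>
      Complex.I * (((k.1:ℝ):ℂ) * ((t:ℝ):ℂ) + ((k.2:ℝ):ℂ) * ((x.2:ℝ):ℂ)))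
      (Complex.I * (k.1:ℝ)) x.1 := by
    have h1 : HasDerivAt (fun t : ℝ => ((t:ℝ):ℂ)) 1 x.1 := by
      exact (hasDerivAt_id x.1).ofReal_comp
    have := ((h1.const_mul (((k.1:ℝ):ℂ))).add_const (((k.2:ℝ):ℂ) * ((x.2:ℝ):ℂ))).const_mul
      Complex.I
    simpa [mul_one] using this
  have := h0.cexp
  simpa [ek, mul_comm] using this

lemma hasDerivAt_ek2 (k : ℤ × ℤ) (x : ℝ × ℝ) :
    HasDerivAt (fun t => ek k (x.1, t)) (Complex.I * (k.2 : ℝ) * ek k x) x.2 := by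
  have h0 : HasDerivAt (fun t : ℝ =>
      Complex.I * (((k.1:ℝ):ℂ) * ((x.1:ℝ):ℂ) + ((k.2:ℝ):ℂ) * ((t:ℝ):ℂ)))
      (Complex.I * (k.2:ℝ)) x.2 := by
    have h1 : HasDerivAt (fun t : ℝ => ((t:ℝ):ℂ)) 1 x.2 := by
      exact (hasDerivAt_id x.2).ofReal_comp
    have := ((h1.const_mul (((k.2:ℝ):ℂ))).const_add (((k.1:ℝ):ℂ) * ((x.1:ℝ):ℂ))).const_mul
      Complex.I
    simpa [mul_one] using this
  have := h0.cexp
  simpa [ek, mul_comm] using this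

lemma hasDerivAt_A1 {H : ℝ × ℝ → ℝ} (hH : ContDiff ℝ 1 H) (μ : ℝ) (k : ℤ × ℤ) (x : ℝ × ℝ) :
    HasDerivAt (fun t => (Afield μ H k (t, x.2)).1)
      (Complex.I * (k.1 : ℝ) * ek k x *
          ((Real.sinh (μ * knorm k * H x) / Real.cosh (μ * knorm k) *
            ((k.1 : ℝ) / knorm k) : ℝ) : ℂ)
        + ek k x *
          ((Real.cosh (μ * knorm k * H x) * (μ * knorm k * fderiv ℝ H x ((1:ℝ),(0:ℝ)))
              / Real.cosh (μ * knorm k) * ((k.1 : ℝ) / knorm k) : ℝ) : ℂ)) x.1 := by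
  have hHd := hasDerivAt_H1 hH x
  have hinner : HasDerivAt (fun t => μ * knorm k * H (t, x.2))
      (μ * knorm k * fderiv ℝ H x ((1:ℝ),(0:ℝ))) x.1 := hHd.const_mul _
  have hsinh : HasDerivAt (fun t => Real.sinh (μ * knorm k * H (t, x.2)))
      (Real.cosh (μ * knorm k * H (x.1, x.2)) * (μ * knorm k * fderiv ℝ H x ((1:ℝ),(0:ℝ))))
      x.1 := (Real.hasDerivAt_sinh _).comp x.1 hinner
  have hreal : HasDerivAt
      (fun t => Real.sinh (μ * knorm k * H (t, x.2)) / Real.cosh (μ * knorm k) *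
        ((k.1 : ℝ) / knorm k))
      (Real.cosh (μ * knorm k * H x) * (μ * knorm k * fderiv ℝ H x ((1:ℝ),(0:ℝ)))
        / Real.cosh (μ * knorm k) * ((k.1 : ℝ) / knorm k)) x.1 := by
    have := (hsinh.div_const (Real.cosh (μ * knorm k))).mul_const ((k.1 : ℝ) / knorm k)
    simpa using this
  have hek := hasDerivAt_ek1 k x
  have := hek.mul hreal.ofReal_comp
  simp only [Afield]
  exact this

lemma hasDerivAt_A2 {H : ℝ × ℝ → ℝ} (hH : ContDiff ℝ 1 H) (μ : ℝ) (k : ℤ × ℤ) (x : ℝ × ℝ) :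
    HasDerivAt (fun t => (Afield μ H k (x.1, t)).2)
      (Complex.I * (k.2 : ℝ) * ek k x *
          ((Real.sinh (μ * knorm k * H x) / Real.cosh (μ * knorm k) *
            ((k.2 : ℝ) / knorm k) : ℝ) : ℂ)
        + ek k x *
          ((Real.cosh (μ * knorm k * H x) * (μ * knorm k * fderiv ℝ H x ((0:ℝ),(1:ℝ)))
              / Real.cosh (μ * knorm k) * ((k.2 : ℝ) / knorm k) : ℝ) : ℂ)) x.2 := by
  have hHd := hasDerivAt_H2 hH x
  have hinner : HasDerivAt (fun t => μ * knorm k * H (x.1, t))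
      (μ * knorm k * fderiv ℝ H x ((0:ℝ),(1:ℝ))) x.2 := hHd.const_mul _
  have hsinh : HasDerivAt (fun t => Real.sinh (μ * knorm k * H (x.1, t)))
      (Real.cosh (μ * knorm k * H (x.1, x.2)) * (μ * knorm k * fderiv ℝ H x ((0:ℝ),(1:ℝ))))
      x.2 := (Real.hasDerivAt_sinh _).comp x.2 hinner
  have hreal : HasDerivAt
      (fun t => Real.sinh (μ * knorm k * H (x.1, t)) / Real.cosh (μ * knorm k) *
        ((k.2 : ℝ) / knorm k))
      (Real.cosh (μ * knorm k * H x) * (μ * knorm k * fderiv ℝ H x ((0:ℝ),(1:ℝ)))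
        / Real.cosh (μ * knorm k) * ((k.2 : ℝ) / knorm k)) x.2 := by
    have := (hsinh.div_const (Real.cosh (μ * knorm k))).mul_const ((k.2 : ℝ) / knorm k)
    simpa using this
  have hek := hasDerivAt_ek2 k x
  have := hek.mul hreal.ofReal_comp
  simp only [Afield]
  exact this

lemma Adiv_eq {H : ℝ × ℝ → ℝ} (hH : ContDiff ℝ 1 H) (μ : ℝ) (k : ℤ × ℤ) (x : ℝ × ℝ) :
    Adiv μ H k x =
      (Complex.I * (k.1 : ℝ) * ek k x *
          ((Real.sinh (μ * knorm k * H x) / Real.cosh (μ * knorm k) *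
            ((k.1 : ℝ) / knorm k) : ℝ) : ℂ)
        + ek k x *
          ((Real.cosh (μ * knorm k * H x) * (μ * knorm k * fderiv ℝ H x ((1:ℝ),(0:ℝ)))
              / Real.cosh (μ * knorm k) * ((k.1 : ℝ) / knorm k) : ℝ) : ℂ))
      + (Complex.I * (k.2 : ℝ) * ek k x *
          ((Real.sinh (μ * knorm k * H x) / Real.cosh (μ * knorm k) *
            ((k.2 : ℝ) / knorm k) : ℝ) : ℂ)
        + ek k x *
          ((Real.cosh (μ * knorm k * H x) * (μ * knorm k * fderiv ℝ H x ((0:ℝ),(1:ℝ)))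
              / Real.cosh (μ * knorm k) * ((k.2 : ℝ) / knorm k) : ℝ) : ℂ)) := by
  rw [Adiv, (hasDerivAt_A1 hH μ k x).deriv, (hasDerivAt_A2 hH μ k x).deriv]

lemma continuous_ek' (k : ℤ × ℤ) : Continuous fun x : ℝ × ℝ => ek k x := by
  unfold ek; fun_prop

lemma continuous_Adiv {H : ℝ × ℝ → ℝ} (hH : ContDiff ℝ 1 H) (μ : ℝ) (k : ℤ × ℤ) :
    Continuous fun x => Adiv μ H k x := by
  have hfd : Continuous fun x : ℝ × ℝ => fderiv ℝ H x :=
    hH.continuous_fderiv one_ne_zero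
  have h1 : Continuous fun x : ℝ × ℝ => fderiv ℝ H x ((1:ℝ),(0:ℝ)) :=
    hfd.clm_apply continuous_const
  have h2 : Continuous fun x : ℝ × ℝ => fderiv ℝ H x ((0:ℝ),(1:ℝ)) :=
    hfd.clm_apply continuous_const
  have hHc : Continuous H := hH.continuous
  have he := continuous_ek' k
  simp only [funext (Adiv_eq hH μ k)]
  fun_prop

lemma abs_fst_le_knorm (k : ℤ × ℤ) : |(k.1 : ℝ)| ≤ knorm k := by
  rw [knorm, ← Real.sqrt_sq_eq_abs]
  exact Real.sqrt_le_sqrt (by nlinarith [sq_nonneg ((k.2:ℝ))])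

lemma abs_snd_le_knorm (k : ℤ × ℤ) : |(k.2 : ℝ)| ≤ knorm k := by
  rw [knorm, ← Real.sqrt_sq_eq_abs]
  exact Real.sqrt_le_sqrt (by nlinarith [sq_nonneg ((k.1:ℝ))])

lemma knorm_nonneg (k : ℤ × ℤ) : 0 ≤ knorm k := Real.sqrt_nonneg _

lemma knorm_pos {k : ℤ × ℤ} (hk : k ≠ 0) : 0 < knorm k := by
  rcases eq_or_ne k.1 0 with h1 | h1
  · have h2 : k.2 ≠ 0 := fun h2 => hk (Prod.ext h1 h2)
    have : (1:ℝ) ≤ |(k.2:ℝ)| := by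
      have := Int.one_le_abs h2
      calc (1:ℝ) ≤ |(k.2:ℤ)| := by exact_mod_cast this
        _ = |(k.2:ℝ)| := by push_cast [Int.cast_abs]; rfl
    linarith [abs_snd_le_knorm k]
  · have : (1:ℝ) ≤ |(k.1:ℝ)| := by
      have := Int.one_le_abs h1
      calc (1:ℝ) ≤ |(k.1:ℤ)| := by exact_mod_cast this
        _ = |(k.1:ℝ)| := by push_cast [Int.cast_abs]; rfl
    linarith [abs_fst_le_knorm k]

lemma knorm_ge_half (k : ℤ × ℤ) : (|(k.1:ℝ)| + |(k.2:ℝ)|) / 2 ≤ knorm k := by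
  have h1 := abs_fst_le_knorm k
  have h2 := abs_snd_le_knorm k
  linarith

lemma norm_ek (k : ℤ × ℤ) (x : ℝ × ℝ) : ‖ek k x‖ = 1 := by
  rw [ek, Complex.norm_exp]
  have : (Complex.I * ((k.1 : ℝ) * x.1 + (k.2 : ℝ) * x.2)).re = 0 := by
    simp [Complex.mul_re]
  rw [this, Real.exp_zero]

lemma Adiv_norm_le {H : ℝ × ℝ → ℝ} (hH : ContDiff ℝ 1 H) {μ c d : ℝ} (hμ : 0 < μ)
    (hHc : ∀ x, |H x| ≤ c)
    (hHx : ∀ x : ℝ × ℝ, |deriv (fun t => H (t, x.2)) x.1| ≤ d)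
    (hHy : ∀ x : ℝ × ℝ, |deriv (fun t => H (x.1, t)) x.2| ≤ d)
    {k : ℤ × ℤ} (hk : k ≠ 0) (x : ℝ × ℝ) :
    ‖Adiv μ H k x‖ ≤ 2 * (1 + μ * d) * knorm k *
      (Real.cosh (μ * knorm k * c) / Real.cosh (μ * knorm k)) := by
  set n := knorm k with hn_def
  have hn : 0 < n := knorm_pos hk
  have hc0 : 0 ≤ c := le_trans (_root_.abs_nonneg _) (hHc 0)
  have hd0 : 0 ≤ d := le_trans (_root_.abs_nonneg _) (hHx 0)
  have hD1 : |fderiv ℝ H x ((1:ℝ),(0:ℝ))| ≤ d := by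
    rw [← (hasDerivAt_H1 hH x).deriv]; exact hHx x
  have hD2 : |fderiv ℝ H x ((0:ℝ),(1:ℝ))| ≤ d := by
    rw [← (hasDerivAt_H2 hH x).deriv]; exact hHy x
  have hcoshpos : 0 < Real.cosh (μ * n) := Real.cosh_pos _
  have hμn : 0 ≤ μ * n := by positivity
  have habs : |μ * n * H x| ≤ μ * n * c := by
    rw [_root_.abs_mul, _root_.abs_of_nonneg hμn]
    exact mul_le_mul_of_nonneg_left (hHc x) hμn
  have hsb : |Real.sinh (μ * n * H x)| ≤ Real.cosh (μ * n * c) := by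
    rw [Real.abs_sinh]
    calc Real.sinh |μ * n * H x| ≤ Real.cosh |μ * n * H x| := (Real.sinh_lt_cosh _).le
      _ ≤ Real.cosh (μ * n * c) := by
          rw [Real.cosh_le_cosh, _root_.abs_abs, _root_.abs_of_nonneg (mul_nonneg hμn hc0)]
          exact habs
  have hcb : Real.cosh (μ * n * H x) ≤ Real.cosh (μ * n * c) := by
    rw [Real.cosh_le_cosh, _root_.abs_of_nonneg (mul_nonneg hμn hc0)]
    exact habs
  have hk1 : |(k.1:ℝ)| ≤ n := abs_fst_le_knorm k
  have hk2 : |(k.2:ℝ)| ≤ n := abs_snd_le_knorm k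
  have hcc : 0 ≤ Real.cosh (μ * n * c) := (Real.cosh_pos _).le
  rw [Adiv_eq hH μ k x]
  have hek1 : ‖ek k x‖ = 1 := by
    simpa using norm_ek k x
  have e1 : ∀ (m : ℝ) (r : ℝ), ‖Complex.I * (m:ℂ) * ek k x * ((r:ℝ):ℂ)‖ = |m| * |r| := by
    intro m r
    simp [norm_mul, hek1, Complex.norm_real, Complex.norm_I]
  have e2 : ∀ (r : ℝ), ‖ek k x * ((r:ℝ):ℂ)‖ = |r| := by
    intro r
    simp [norm_mul, hek1, Complex.norm_real]
  have hS : ∀ m : ℝ, |m| ≤ n →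
      |Real.sinh (μ * n * H x) / Real.cosh (μ * n) * (m / n)| ≤
        Real.cosh (μ * n * c) / Real.cosh (μ * n) * (|m| / n) := by
    intro m hm
    rw [_root_.abs_mul, _root_.abs_div, _root_.abs_div, _root_.abs_of_nonneg hcoshpos.le,
      _root_.abs_of_nonneg hn.le]
    gcongr
  have hr1 : ∀ m : ℝ, |m| ≤ n → |m| / n ≤ 1 := fun m hm => (div_le_one hn).mpr hm
  have hT : ∀ (m D : ℝ), |m| ≤ n → |D| ≤ d →
      |Real.cosh (μ * n * H x) * (μ * n * D) / Real.cosh (μ * n) * (m / n)| ≤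
        Real.cosh (μ * n * c) / Real.cosh (μ * n) * (μ * d * n) := by
    intro m D hm hD
    have h1 : |Real.cosh (μ*n*H x) * (μ*n*D) / Real.cosh (μ*n) * (m/n)|
        = Real.cosh (μ*n*H x) * (μ*n*|D|) / Real.cosh (μ*n) * (|m|/n) := by
      rw [_root_.abs_mul, _root_.abs_div, _root_.abs_mul, _root_.abs_mul, _root_.abs_div,
        _root_.abs_of_nonneg hcoshpos.le, _root_.abs_of_nonneg (Real.cosh_pos _).le,
        _root_.abs_of_nonneg hμn, _root_.abs_of_nonneg hn.le]
    rw [h1]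
    have h2 : Real.cosh (μ*n*H x) * (μ*n*|D|) ≤ Real.cosh (μ*n*c) * (μ*n*d) := by
      apply mul_le_mul hcb (mul_le_mul_of_nonneg_left hD hμn) (by positivity) hcc
    calc Real.cosh (μ*n*H x) * (μ*n*|D|) / Real.cosh (μ*n) * (|m|/n)
        ≤ Real.cosh (μ*n*H x) * (μ*n*|D|) / Real.cosh (μ*n) * 1 :=
          mul_le_mul_of_nonneg_left (hr1 m hm) (by positivity)
      _ ≤ Real.cosh (μ*n*c) * (μ*n*d) / Real.cosh (μ*n) := by
          rw [mul_one]; gcongr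
      _ = Real.cosh (μ*n*c) / Real.cosh (μ*n) * (μ*d*n) := by ring
  set R := Real.cosh (μ * n * c) / Real.cosh (μ * n) with hR_def
  have hR0 : 0 ≤ R := by positivity
  have hq : ∀ m : ℝ, |m| ≤ n →
      ∀ S : ℝ, |S| ≤ R * (|m| / n) → |m| * |S| ≤ R * n := by
    intro m hm S hSle
    have h1 : |m| * |S| ≤ |m| * (R * (|m| / n)) :=
      mul_le_mul_of_nonneg_left hSle (_root_.abs_nonneg m)
    have h2 : |m| * (R * (|m| / n)) = R * (|m| * |m| / n) := by ring
    have h3 : |m| * |m| / n ≤ n := by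
      rw [div_le_iff₀ hn]
      exact mul_le_mul hm hm (_root_.abs_nonneg _) hn.le
    calc |m| * |S| ≤ R * (|m| * |m| / n) := by rw [← h2]; exact h1
      _ ≤ R * n := mul_le_mul_of_nonneg_left h3 hR0
  refine le_trans (norm_add_le _ _) ?_
  refine le_trans (add_le_add (norm_add_le _ _) (norm_add_le _ _)) ?_
  rw [e1, e2, e1, e2]
  have B1 := hq (k.1:ℝ) hk1 _ (hS (k.1:ℝ) hk1)
  have B3 := hq (k.2:ℝ) hk2 _ (hS (k.2:ℝ) hk2)
  have B2 := hT (k.1:ℝ) _ hk1 hD1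
  have B4 := hT (k.2:ℝ) _ hk2 hD2
  have hfin : R * n + R * (μ*d*n) + (R * n + R * (μ*d*n)) = 2*(1+μ*d)*n*R := by ring
  linarith

lemma ek_per1 (k : ℤ × ℤ) (t s : ℝ) : ek k (t + 2 * π, s) = ek k (t, s) := by
  rw [ek, ek]
  have h : Complex.I * ((k.1 : ℝ) * ((t + 2 * π : ℝ) : ℂ) + (k.2 : ℝ) * (s : ℂ)) =
      Complex.I * ((k.1 : ℝ) * (t : ℂ) + (k.2 : ℝ) * (s : ℂ)) + (k.1 : ℤ) * (2 * π * Complex.I) := by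
    push_cast
    ring
  rw [h, Complex.exp_add, Complex.exp_int_mul_two_pi_mul_I, mul_one]

lemma ek_per2 (k : ℤ × ℤ) (t s : ℝ) : ek k (t, s + 2 * π) = ek k (t, s) := by
  rw [ek, ek]
  have h : Complex.I * ((k.1 : ℝ) * (t : ℂ) + (k.2 : ℝ) * ((s + 2 * π : ℝ) : ℂ)) =
      Complex.I * ((k.1 : ℝ) * (t : ℂ) + (k.2 : ℝ) * (s : ℂ)) + (k.2 : ℤ) * (2 * π * Complex.I) := by
    push_cast
    ring
  rw [h, Complex.exp_add, Complex.exp_int_mul_two_pi_mul_I, mul_one]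

lemma Afield_per1 {H : ℝ × ℝ → ℝ}
    (hHper : ∀ x : ℝ × ℝ, H (x.1 + 2 * π, x.2) = H x ∧ H (x.1, x.2 + 2 * π) = H x)
    (μ : ℝ) (k : ℤ × ℤ) (t s : ℝ) :
    Afield μ H k (t + 2 * π, s) = Afield μ H k (t, s) := by
  have hh : H (t + 2 * π, s) = H (t, s) := (hHper (t, s)).1
  simp only [Afield, ek_per1, hh]

lemma Afield_per2 {H : ℝ × ℝ → ℝ}
    (hHper : ∀ x : ℝ × ℝ, H (x.1 + 2 * π, x.2) = H x ∧ H (x.1, x.2 + 2 * π) = H x)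
    (μ : ℝ) (k : ℤ × ℤ) (t s : ℝ) :
    Afield μ H k (t, s + 2 * π) = Afield μ H k (t, s) := by
  have hh : H (t, s + 2 * π) = H (t, s) := (hHper (t, s)).2
  simp only [Afield, ek_per2, hh]

lemma Adiv_per1 {H : ℝ × ℝ → ℝ}
    (hHper : ∀ x : ℝ × ℝ, H (x.1 + 2 * π, x.2) = H x ∧ H (x.1, x.2 + 2 * π) = H x)
    (μ : ℝ) (k : ℤ × ℤ) (x : ℝ × ℝ) :
    Adiv μ H k (x.1 + 2 * π, x.2) = Adiv μ H k x := by
  unfold Adiv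
  congr 1
  · calc deriv (fun t => (Afield μ H k (t, x.2)).1) (x.1 + 2 * π)
        = deriv (fun t => (Afield μ H k (t + 2 * π, x.2)).1) x.1 :=
          (deriv_comp_add_const _ _ _).symm
      _ = deriv (fun t => (Afield μ H k (t, x.2)).1) x.1 := by
          congr 1
          funext t
          rw [Afield_per1 hHper]
  · congr 1
    funext t
    rw [Afield_per1 hHper]

lemma Adiv_per2 {H : ℝ × ℝ → ℝ}
    (hHper : ∀ x : ℝ × ℝ, H (x.1 + 2 * π, x.2) = H x ∧ H (x.1, x.2 + 2 * π) = H x)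
    (μ : ℝ) (k : ℤ × ℤ) (x : ℝ × ℝ) :
    Adiv μ H k (x.1, x.2 + 2 * π) = Adiv μ H k x := by
  unfold Adiv
  congr 1
  · congr 1
    funext t
    rw [Afield_per2 hHper]
  · calc deriv (fun t => (Afield μ H k (x.1, t)).2) (x.2 + 2 * π)
        = deriv (fun t => (Afield μ H k (x.1, t + 2 * π)).2) x.2 :=
          (deriv_comp_add_const _ _ _).symm
      _ = deriv (fun t => (Afield μ H k (x.1, t)).2) x.2 := by
          congr 1
          funext t
          rw [Afield_per2 hHper]

set_option maxHeartbeats 1000000 in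
/-- under the same hypotheses as for `B`, the series
`A[f](x) = Σ_{k≠0} f_k ∇·[e^{ik·x} sinh(μ|k|H(x))/cosh(μ|k|) · k/|k|]` converges
uniformly on the torus for every bounded sequence `(f_k)` and defines a continuous
doubly periodic function. -/
theorem stmt8 (μ c d : ℝ) (hμ : 0 < μ) (hc : c < 1)
    (H : ℝ × ℝ → ℝ) (hH : ContDiff ℝ 1 H)
    (hHper : ∀ x : ℝ × ℝ, H (x.1 + 2 * π, x.2) = H x ∧ H (x.1, x.2 + 2 * π) = H x)
    (hHc : ∀ x, |H x| ≤ c)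
    (hHx : ∀ x : ℝ × ℝ, |deriv (fun t => H (t, x.2)) x.1| ≤ d)
    (hHy : ∀ x : ℝ × ℝ, |deriv (fun t => H (x.1, t)) x.2| ≤ d)
    (f : {k : ℤ × ℤ // k ≠ 0} → ℂ) (M : ℝ) (hf : ∀ k, ‖f k‖ ≤ M) :
    ∃ g : ℝ × ℝ → ℂ,
      TendstoUniformly
        (fun (t : Finset {k : ℤ × ℤ // k ≠ 0}) (x : ℝ × ℝ) =>
          ∑ k ∈ t, f k * Adiv μ H k.1 x) g atTop ∧
      Continuous g ∧
      (∀ x : ℝ × ℝ, g (x.1 + 2 * π, x.2) = g x ∧ g (x.1, x.2 + 2 * π) = g x) := by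
  have hc0 : 0 ≤ c := le_trans (_root_.abs_nonneg _) (hHc 0)
  have hd0 : 0 ≤ d := le_trans (_root_.abs_nonneg _) (hHx 0)
  have hM0 : 0 ≤ M := le_trans (norm_nonneg _) (hf ⟨(1, 0), by decide⟩)
  set a := μ * (1 - c) with ha_def
  have ha : 0 < a := mul_pos hμ (by linarith)
  set r := Real.exp (-(a / 4)) with hr_def
  have hr0 : 0 < r := Real.exp_pos _
  have hr1 : r < 1 := by
    rw [hr_def, ← Real.exp_zero]
    exact Real.exp_lt_exp.mpr (by linarith)
  set K := M * (8 * (1 + μ * d) / a) with hK_def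
  have hK0 : 0 ≤ K := by
    apply mul_nonneg hM0
    positivity
  set u : {k : ℤ × ℤ // k ≠ 0} → ℝ :=
    fun k => K * (r ^ k.1.1.natAbs * r ^ k.1.2.natAbs) with hu_def
  have hu : Summable u := by
    have h1 : Summable (fun m : ℤ => r ^ m.natAbs) := by
      apply Summable.of_nat_of_neg
      · simpa using summable_geometric_of_lt_one hr0.le hr1
      · simpa using summable_geometric_of_lt_one hr0.le hr1
    have h2 : Summable (fun p : ℤ × ℤ => r ^ p.1.natAbs * r ^ p.2.natAbs) :=
      h1.mul_of_nonneg h1 (fun m => by positivity) (fun m => by positivity)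
    exact (h2.subtype _).mul_left K
  have hexp_pow : ∀ m : ℕ, Real.exp (-(a / 4) * (m : ℝ)) = r ^ m := by
    intro m
    rw [hr_def, ← Real.exp_nat_mul]
    congr 1
    ring
  have hbound : ∀ (k : {k : ℤ × ℤ // k ≠ 0}) (x : ℝ × ℝ),
      ‖f k * Adiv μ H k.1 x‖ ≤ u k := by
    intro k x
    set n := knorm k.1 with hn_def
    have hn : 0 < n := knorm_pos k.2
    have step1 : ‖Adiv μ H k.1 x‖ ≤ 2 * (1 + μ * d) * n *
        (Real.cosh (μ * n * c) / Real.cosh (μ * n)) :=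
      Adiv_norm_le hH hμ hHc hHx hHy k.2 x
    have hμn : 0 ≤ μ * n := by positivity
    have hμnc : 0 ≤ μ * n * c := by positivity
    have e1 : Real.cosh (μ * n * c) ≤ Real.exp (μ * n * c) := by
      rw [Real.cosh_eq]
      nlinarith [Real.exp_le_exp.mpr (show -(μ * n * c) ≤ μ * n * c by linarith)]
    have e2 : Real.exp (μ * n) / 2 ≤ Real.cosh (μ * n) := by
      rw [Real.cosh_eq]
      nlinarith [Real.exp_pos (-(μ * n))]
    have step2 : Real.cosh (μ * n * c) / Real.cosh (μ * n) ≤ 2 * Real.exp (-(a * n)) := by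
      have h5 : Real.cosh (μ * n * c) / Real.cosh (μ * n) ≤
          Real.exp (μ * n * c) / (Real.exp (μ * n) / 2) :=
        div_le_div₀ (Real.exp_pos _).le e1 (by positivity) e2
      have h6 : Real.exp (μ * n * c) / (Real.exp (μ * n) / 2) = 2 * Real.exp (-(a * n)) := by
        rw [show -(a * n) = μ * n * c - μ * n by rw [ha_def]; ring, Real.exp_sub]
        field_simp
      linarith [h5, h6.le, h6.ge]
    have step3 : n * Real.exp (-(a * n)) ≤ (2 / a) * Real.exp (-(a / 2 * n)) := by
      have h4 : a / 2 * n ≤ Real.exp (a / 2 * n) := by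
        nlinarith [Real.add_one_le_exp (a / 2 * n)]
      calc n * Real.exp (-(a * n))
          = (2 / a) * ((a / 2 * n) * Real.exp (-(a * n))) := by field_simp
        _ ≤ (2 / a) * (Real.exp (a / 2 * n) * Real.exp (-(a * n))) := by
            apply mul_le_mul_of_nonneg_left
              (mul_le_mul_of_nonneg_right h4 (Real.exp_pos _).le) (by positivity)
        _ = (2 / a) * Real.exp (-(a / 2 * n)) := by
            rw [← Real.exp_add]; congr 1; ring
    have step4 : Real.exp (-(a / 2 * n)) ≤ r ^ k.1.1.natAbs * r ^ k.1.2.natAbs := by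
      have hhalf := knorm_ge_half k.1
      have h7 : Real.exp (-(a / 2 * n)) ≤
          Real.exp (-(a / 4) * |(k.1.1 : ℝ)| + -(a / 4) * |(k.1.2 : ℝ)|) := by
        apply Real.exp_le_exp.mpr
        nlinarith [hhalf]
      have h8 : Real.exp (-(a / 4) * |(k.1.1 : ℝ)| + -(a / 4) * |(k.1.2 : ℝ)|) =
          r ^ k.1.1.natAbs * r ^ k.1.2.natAbs := by
        rw [Real.exp_add]
        congr 1
        · rw [← hexp_pow k.1.1.natAbs]
          congr 2
          simp [Nat.cast_natAbs, Int.cast_abs]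
        · rw [← hexp_pow k.1.2.natAbs]
          congr 2
          simp [Nat.cast_natAbs, Int.cast_abs]
      rw [← h8]; exact h7
    calc ‖f k * Adiv μ H k.1 x‖ = ‖f k‖ * ‖Adiv μ H k.1 x‖ := norm_mul _ _
      _ ≤ M * (2 * (1 + μ * d) * n * (Real.cosh (μ * n * c) / Real.cosh (μ * n))) := by
          apply mul_le_mul (hf k) step1 (norm_nonneg _) hM0
      _ ≤ M * (2 * (1 + μ * d) * n * (2 * Real.exp (-(a * n)))) := by
          apply mul_le_mul_of_nonneg_left _ hM0
          apply mul_le_mul_of_nonneg_left step2 (by positivity)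
      _ = M * (4 * (1 + μ * d)) * (n * Real.exp (-(a * n))) := by ring
      _ ≤ M * (4 * (1 + μ * d)) * ((2 / a) * Real.exp (-(a / 2 * n))) := by
          apply mul_le_mul_of_nonneg_left step3 (by positivity)
      _ = K * Real.exp (-(a / 2 * n)) := by rw [hK_def]; field_simp; ring
      _ ≤ K * (r ^ k.1.1.natAbs * r ^ k.1.2.natAbs) :=
          mul_le_mul_of_nonneg_left step4 hK0
  refine ⟨fun x => ∑' k, f k * Adiv μ H k.1 x, tendstoUniformly_tsum hu hbound, ?_, ?_⟩
  · apply (tendstoUniformly_tsum hu hbound).continuous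
    exact Frequently.of_forall fun t =>
      continuous_finset_sum _ fun (k : {k : ℤ × ℤ // k ≠ 0}) _ => continuous_const.mul (continuous_Adiv hH μ k.1)
  · intro x
    constructor
    · exact tsum_congr fun k => by rw [Adiv_per1 hHper]
    · exact tsum_congr fun k => by rw [Adiv_per2 hHper]
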